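/- Let μ* ∘ N_K^{-1} be the Poisson distribution with parameter t > 0, i.e. the probability measure ν_t on ℕ with ν_t({i}) = e^{-t} t^i / i!. Then the Shannon entropy f(t) = -∑_{i=0}^∞ ν_t({i}) log ν_t({i}) tends to 0 as t → 0+. -/

import Mathlib

open Real Filter

private lemma poisson_term_le {t : ℝ} (ht : 0 < t) (ht1 : t < 1) (i : ℕ) :
    negMulLog (Real.exp (-t) * t ^ i / (Nat.factorial i)) ≤
      t * t ^ i + (1 - Real.log t) * (i * t ^ i) := by
  have hfac : (0:ℝ) < (Nat.factorial i : ℝ) := by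
    exact_mod_cast Nat.factorial_pos i
  have hfac1 : (1:ℝ) ≤ (Nat.factorial i : ℝ) := by
    exact_mod_cast Nat.one_le_iff_ne_zero.mpr (Nat.factorial_pos i).ne'
  have hp0 : (0:ℝ) < Real.exp (-t) * t ^ i / (Nat.factorial i) := by positivity
  set p : ℝ := Real.exp (-t) * t ^ i / (Nat.factorial i) with hp
  have hlogp : Real.log p = -t + i * Real.log t - Real.log (Nat.factorial i) := by
    rw [hp, Real.log_div (by positivity) hfac.ne', Real.log_mul (Real.exp_ne_zero _)
      (pow_ne_zero _ ht.ne'), Real.log_exp, Real.log_pow]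
  have hneg : negMulLog p = p * t + (i : ℝ) * (-Real.log t) * p
      + Real.log (Nat.factorial i) * p := by
    rw [Real.negMulLog, hlogp]; ring
  have hexp1 : Real.exp (-t) ≤ 1 := Real.exp_le_one_iff.mpr (by linarith)
  have hple' : p ≤ t ^ i / (Nat.factorial i) := by
    rw [hp]
    rw [div_le_div_iff_of_pos_right hfac]
    nlinarith [pow_pos ht i]
  have hple : p ≤ t ^ i := hple'.trans (by
    rw [div_le_iff₀ hfac]; nlinarith [pow_pos ht i])
  have hlogt : 0 ≤ -Real.log t := by
    simpa using Real.log_nonpos ht.le ht1.le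
  have hlogfac : Real.log (Nat.factorial i) ≤ (i : ℝ) * (Nat.factorial i) := by
    rcases Nat.eq_zero_or_pos i with h | h
    · simp [h, Nat.factorial]
    · calc Real.log (Nat.factorial i) ≤ (Nat.factorial i : ℝ) := Real.log_le_self hfac.le
        _ ≤ (i : ℝ) * (Nat.factorial i) := by
            nlinarith [(Nat.one_le_cast (α := ℝ)).mpr h]
  have h1 : p * t ≤ t ^ i * t := by nlinarith
  have h2 : (i : ℝ) * (-Real.log t) * p ≤ (i : ℝ) * (-Real.log t) * t ^ i := by
    have : 0 ≤ (i : ℝ) * (-Real.log t) := by positivity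
    nlinarith
  have h3 : Real.log (Nat.factorial i) * p ≤ (i : ℝ) * t ^ i := by
    calc Real.log (Nat.factorial i) * p ≤ Real.log (Nat.factorial i) * (t ^ i / Nat.factorial i) := by
          have hlf0 : 0 ≤ Real.log (Nat.factorial i) := Real.log_nonneg hfac1
          nlinarith
      _ ≤ ((i : ℝ) * Nat.factorial i) * (t ^ i / Nat.factorial i) := by
          have : 0 ≤ t ^ i / (Nat.factorial i : ℝ) := by positivity
          nlinarith
      _ = (i : ℝ) * t ^ i := by field_simp
  calc negMulLog p = p * t + (i : ℝ) * (-Real.log t) * p + Real.log (Nat.factorial i) * p := hneg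
    _ ≤ t ^ i * t + (i : ℝ) * (-Real.log t) * t ^ i + (i : ℝ) * t ^ i := by linarith
    _ = t * t ^ i + (1 - Real.log t) * (i * t ^ i) := by ring

/-- The Shannon entropy of the Poisson distribution with parameter `t`,
`f(t) = -∑_i (e^{-t} t^i / i!) log (e^{-t} t^i / i!)`, tends to `0` as `t → 0+`. -/
theorem poisson_entropy_tendsto_zero :
    Tendsto
      (fun t : ℝ =>
        ∑' i : ℕ, negMulLog (Real.exp (-t) * t ^ i / (Nat.factorial i)))
      (nhdsWithin 0 (Set.Ioi 0)) (nhds 0) := by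
  have hmem : Set.Ioo (0:ℝ) 1 ∈ nhdsWithin (0:ℝ) (Set.Ioi 0) :=
    Ioo_mem_nhdsGT_of_mem (by norm_num : (0:ℝ) ∈ Set.Ico (0:ℝ) 1)
  have hid : Tendsto (fun t : ℝ => t) (nhdsWithin 0 (Set.Ioi 0)) (nhds 0) :=
    tendsto_id.mono_right nhdsWithin_le_nhds
  have hlog : Tendsto (fun t : ℝ => Real.log t * t) (nhdsWithin 0 (Set.Ioi 0)) (nhds 0) := by
    simpa using tendsto_log_mul_rpow_nhdsGT_zero (one_pos)
  have h1t : Tendsto (fun t : ℝ => 1 - t) (nhdsWithin 0 (Set.Ioi 0)) (nhds 1) := by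
    simpa using tendsto_const_nhds.sub hid
  have hupper : Tendsto (fun t : ℝ => t * (1 - t)⁻¹ + (t - Real.log t * t) * ((1 - t)^2)⁻¹)
      (nhdsWithin 0 (Set.Ioi 0)) (nhds 0) := by
    have := (hid.mul (h1t.inv₀ one_ne_zero)).add
      ((hid.sub hlog).mul (((h1t.pow 2).inv₀ (by norm_num))))
    simpa using this
  refine tendsto_of_tendsto_of_tendsto_of_le_of_le' tendsto_const_nhds hupper ?_ ?_
  · filter_upwards [hmem] with t ht
    obtain ⟨ht0, ht1⟩ := ht
    refine tsum_nonneg fun i => negMulLog_nonneg (by positivity) ?_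
    have hfac1 : (1:ℝ) ≤ (Nat.factorial i : ℝ) := by
      exact_mod_cast Nat.one_le_iff_ne_zero.mpr (Nat.factorial_pos i).ne'
    have hexp1 : Real.exp (-t) ≤ 1 := Real.exp_le_one_iff.mpr (by linarith)
    have hpow : t ^ i ≤ 1 := pow_le_one₀ ht0.le ht1.le
    rw [div_le_one (by positivity)]
    nlinarith [pow_pos ht0 i]
  · filter_upwards [hmem] with t ht
    obtain ⟨ht0, ht1⟩ := ht
    have hnorm : ‖t‖ < 1 := by rw [Real.norm_eq_abs, abs_of_pos ht0]; exact ht1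
    have hs1 : Summable (fun i : ℕ => t * t ^ i) :=
      (summable_geometric_of_lt_one ht0.le ht1).mul_left t
    have hs2 : Summable (fun i : ℕ => (1 - Real.log t) * ((i : ℝ) * t ^ i)) :=
      (hasSum_coe_mul_geometric_of_norm_lt_one hnorm).summable.mul_left _
    have hc : Summable (fun i : ℕ => t * t ^ i + (1 - Real.log t) * ((i : ℝ) * t ^ i)) :=
      hs1.add hs2
    have hnonneg : ∀ i : ℕ, 0 ≤ negMulLog (Real.exp (-t) * t ^ i / (Nat.factorial i)) := by
      intro i
      refine negMulLog_nonneg (by positivity) ?_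
      have hfac1 : (1:ℝ) ≤ (Nat.factorial i : ℝ) := by
        exact_mod_cast Nat.one_le_iff_ne_zero.mpr (Nat.factorial_pos i).ne'
      have hexp1 : Real.exp (-t) ≤ 1 := Real.exp_le_one_iff.mpr (by linarith)
      have hpow : t ^ i ≤ 1 := pow_le_one₀ ht0.le ht1.le
      rw [div_le_one (by positivity)]
      nlinarith [pow_pos ht0 i]
    have hf : Summable (fun i : ℕ => negMulLog (Real.exp (-t) * t ^ i / (Nat.factorial i))) :=
      hc.of_nonneg_of_le hnonneg (fun i => poisson_term_le ht0 ht1 i)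
    calc ∑' i : ℕ, negMulLog (Real.exp (-t) * t ^ i / (Nat.factorial i))
        ≤ ∑' i : ℕ, (t * t ^ i + (1 - Real.log t) * ((i : ℝ) * t ^ i)) :=
          Summable.tsum_le_tsum (fun i => poisson_term_le ht0 ht1 i) hf hc
      _ = t * (1 - t)⁻¹ + (t - Real.log t * t) * ((1 - t)^2)⁻¹ := by
          rw [Summable.tsum_add hs1 hs2, tsum_mul_left, tsum_mul_left,
            tsum_geometric_of_lt_one ht0.le ht1,
            tsum_coe_mul_geometric_of_norm_lt_one hnorm]
          field_simp
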